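/- Let X be a compact Hausdorff space, X₀ ⊆ X a closed subset, and k ≥ 1. Let B be a C*-algebra, let φ : B → C(X₀, M_k) be a star-algebra homomorphism, and let A := {(b, f) ∈ B × C(X, M_k) : φ b = r f}, where r : C(X, M_k) → C(X₀, M_k) is the restriction homomorphism. Suppose (B_n)_{n∈ℕ} is a sequence of closed star-subalgebras of B such that for every finite set F ⊆ B and every ε > 0 there exists n with dist(b, B_n) < ε for all b ∈ F. Define A_n := {(b, f) ∈ A : b ∈ B_n}. Then for every finite set G ⊆ A and every ε > 0 there exists n such that dist(a, A_n) < ε for all a ∈ G; that is, A is locally approximated by the subalgebras A_n. -/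

import Mathlib

open scoped Matrix.Norms.L2Operator

/-- Lemma 2.18 of the paper: if `A` is the pullback of `φ : B → C(X₀, M_k)` along the
restriction homomorphism `C(X, M_k) → C(X₀, M_k)`, and `B` is locally approximated by
closed star-subalgebras `Bₙ`, then `A` is locally approximated by the corresponding
pullbacks `Aₙ = {(b, f) ∈ A : b ∈ Bₙ}`. -/
theorem pullback_locally_approximated
    {X : Type*} [TopologicalSpace X] [CompactSpace X] [T2Space X]
    (X₀ : Set X) (hX₀ : IsClosed X₀)
    (k : ℕ) (hk : 1 ≤ k)
    {B : Type*} [NonUnitalCStarAlgebra B]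
    (φ : B →⋆ₙₐ[ℂ] C(X₀, Matrix (Fin k) (Fin k) ℂ))
    (Bn : ℕ → NonUnitalStarSubalgebra ℂ B)
    (hBnClosed : ∀ n, IsClosed (Bn n : Set B))
    (hBn : ∀ F : Finset B, ∀ ε : ℝ, 0 < ε →
      ∃ n, ∀ b ∈ F, Metric.infDist b (Bn n : Set B) < ε) :
    ∀ G : Finset (B × C(X, Matrix (Fin k) (Fin k) ℂ)),
      (∀ a ∈ G, φ a.1 = a.2.restrict X₀) →
      ∀ ε : ℝ, 0 < ε →
        ∃ n, ∀ a ∈ G,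
          Metric.infDist a {p : B × C(X, Matrix (Fin k) (Fin k) ℂ) |
            φ p.1 = p.2.restrict X₀ ∧ p.1 ∈ Bn n} < ε := by
  classical
  intro G hG ε hε
  haveI : CompactSpace X₀ := isCompact_iff_compactSpace.mp (hX₀.isCompact)
  letI : CStarAlgebra (Matrix (Fin k) (Fin k) ℂ) := { }
  obtain ⟨n, hn⟩ := hBn (G.image Prod.fst) ε hε
  refine ⟨n, fun a ha => ?_⟩
  have hbdist : Metric.infDist a.1 (Bn n : Set B) < ε :=
    hn a.1 (Finset.mem_image_of_mem _ ha)
  obtain ⟨b', hb'mem, hb'⟩ :=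
    (Metric.infDist_lt_iff ⟨0, (Bn n).zero_mem⟩).mp hbdist
  -- the discrepancy on `X₀`
  set g : C(X₀, Matrix (Fin k) (Fin k) ℂ) := φ b' - a.2.restrict X₀ with hg_def
  have hgnorm : ‖g‖ < ε := by
    have h1 : g = φ (b' - a.1) := by
      rw [map_sub, hg_def, hG a ha]
    rw [h1]
    calc ‖φ (b' - a.1)‖ ≤ ‖b' - a.1‖ := NonUnitalStarAlgHom.norm_apply_le φ _
      _ = ‖a.1 - b'‖ := norm_sub_rev _ _
      _ = dist a.1 b' := (dist_eq_norm _ _).symm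
      _ < ε := hb'
  -- extend `g` to all of `X` with the same norm
  obtain ⟨h, hhnorm, hhres⟩ :=
    BoundedContinuousFunction.exists_norm_eq_restrict_eq hX₀ ℂ
      (BoundedContinuousFunction.mkOfCompact g)
  set f' : C(X, Matrix (Fin k) (Fin k) ℂ) := a.2 + h.toContinuousMap with hf'_def
  have hres : φ b' = f'.restrict X₀ := by
    ext x
    have hx : h x = g x := by
      have := congrArg (fun u => u x) hhres
      simpa using this
    simp [hf'_def, hx, hg_def, ContinuousMap.restrict_apply]
  have hmem : (b', f') ∈ {p : B × C(X, Matrix (Fin k) (Fin k) ℂ) |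
      φ p.1 = p.2.restrict X₀ ∧ p.1 ∈ Bn n} := ⟨hres, hb'mem⟩
  refine lt_of_le_of_lt (Metric.infDist_le_dist_of_mem hmem) ?_
  rw [Prod.dist_eq]
  refine max_lt hb' ?_
  have hdist2 : dist a.2 f' = ‖h‖ := by
    rw [dist_eq_norm]
    have : a.2 - f' = -h.toContinuousMap := by
      rw [hf'_def]; abel
    rw [this, norm_neg, ← BoundedContinuousFunction.norm_mkOfCompact]
    congr 1
  rw [hdist2, hhnorm, BoundedContinuousFunction.norm_mkOfCompact]
  exact hgnorm
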